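/- arXiv:2409.03506 — 4 statements merged into one kernel-verified Lean document; each statement's English description precedes it below -/
import Mathlib

section
/- Contraction property: let C₁ = 4·max{‖P₀'‖_∞, ‖Q₀'‖_∞, (2/(a₀ℓ))‖ω_B'‖_∞} and C₂ = (C₁ℓ/(2η))‖ΔW'‖_∞ + k/η. Then for T = 1/(2C₂), the map ψ sending x ∈ C⁰([0,T]) with x(0)=0 to ψ[x](t) = ∫₀ᵗ F[x](s) ds satisfies ‖ψ[x₁] − ψ[x₂]‖_∞ ≤ (1/2)‖x₁ − x₂‖_∞ for all such x₁, x₂; in particular ψ has a unique fixed point in this set. -/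
open Real Set MeasureTheory intervalIntegral
open scoped NNReal

/-- The explicit integral formula `P_x` for the density of the bottom motor row. -/
noncomputable def Pint (ℓ a₀ : ℝ) (ωB P₀ : ℝ → ℝ) (x : ℝ → ℝ) (ξ t : ℝ) : ℝ :=
  Real.exp (-a₀ * t) * P₀ (ξ - x t)
    + (Real.exp (-a₀ * t) / ℓ) * ∫ s in (0 : ℝ)..t, Real.exp (a₀ * s) * ωB (ξ + x s - x t)

/-- The explicit integral formula `Q_x` for the density of the top motor row. -/
noncomputable def Qint (ℓ a₀ : ℝ) (ωB Q₀ : ℝ → ℝ) (x : ℝ → ℝ) (ξ t : ℝ) : ℝ :=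
  Real.exp (-a₀ * t) * Q₀ (ξ + x t)
    + (Real.exp (-a₀ * t) / ℓ) * ∫ s in (0 : ℝ)..t, Real.exp (a₀ * s) * ωB (ξ - x s + x t)

/-- The velocity functional `F[x]`. -/
noncomputable def Fint (ℓ k η a₀ : ℝ) (ωB ΔW P₀ Q₀ : ℝ → ℝ) (x : ℝ → ℝ) (s : ℝ) : ℝ :=
  (1 / (2 * η)) *
      (∫ ξ in (0 : ℝ)..ℓ, (Pint ℓ a₀ ωB P₀ x ξ s - Qint ℓ a₀ ωB Q₀ x ξ s) * deriv ΔW ξ)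
    - (k / η) * x s

/-- The Picard map `ψ[x](t) = ∫₀ᵗ F[x](s) ds`. -/
noncomputable def psiMap (ℓ k η a₀ : ℝ) (ωB ΔW P₀ Q₀ : ℝ → ℝ) (x : ℝ → ℝ) (t : ℝ) : ℝ :=
  ∫ s in (0 : ℝ)..t, Fint ℓ k η a₀ ωB ΔW P₀ Q₀ x s

lemma periodic_deriv'' {f : ℝ → ℝ} {c : ℝ} (hf : Function.Periodic f c) :
    Function.Periodic (deriv f) c := by
  intro x
  have h : (fun y => f (y + c)) = f := funext fun y => hf y
  rw [← deriv_comp_add_const, h]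

lemma bddAbove_absderiv {g : ℝ → ℝ} (hg : Continuous (deriv g)) (a b : ℝ) :
    BddAbove (Set.range fun ξ : Icc a b => |deriv g ξ.1|) := by
  have h := (isCompact_Icc (a := a) (b := b)).bddAbove_image (f := fun y => |deriv g y|) hg.abs.continuousOn
  rwa [Set.image_eq_range] at h

lemma supderiv_nonneg {g : ℝ → ℝ} (hg : Continuous (deriv g)) {a b : ℝ} (hab : a ≤ b) :
    0 ≤ ⨆ ξ : Icc a b, |deriv g ξ.1| :=
  le_trans (abs_nonneg _) (le_ciSup (bddAbove_absderiv hg a b) ⟨a, left_mem_Icc.2 hab⟩)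

lemma deriv_bound_of_periodic {f : ℝ → ℝ} {c : ℝ} (hc : 0 < c) (hf : ContDiff ℝ 1 f)
    (hper : Function.Periodic f c) (y : ℝ) :
    |deriv f y| ≤ ⨆ ξ : Icc (0:ℝ) c, |deriv f ξ.1| := by
  have hcont : Continuous (deriv f) := hf.continuous_deriv le_rfl
  obtain ⟨z, hz, hzy⟩ := (periodic_deriv'' hper).exists_mem_Ico₀ hc y
  rw [hzy]
  exact le_ciSup (bddAbove_absderiv hcont 0 c) ⟨z, Ico_subset_Icc_self hz⟩

lemma lip_of_periodic {f : ℝ → ℝ} {c : ℝ} (hc : 0 < c) (hf : ContDiff ℝ 1 f)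
    (hper : Function.Periodic f c) (a b : ℝ) :
    |f a - f b| ≤ (⨆ ξ : Icc (0:ℝ) c, |deriv f ξ.1|) * |a - b| := by
  have := Convex.norm_image_sub_le_of_norm_deriv_le (s := univ) (f := f)
    (fun x _ => hf.differentiable one_ne_zero x)
    (fun x _ => deriv_bound_of_periodic hc hf hper x) convex_univ (mem_univ b) (mem_univ a)
  simpa [Real.norm_eq_abs] using this

lemma exp_int (a₀ s : ℝ) (ha₀ : a₀ ≠ 0) :
    ∫ u in (0:ℝ)..s, Real.exp (a₀ * u) = (Real.exp (a₀ * s) - 1) / a₀ := by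
  rw [intervalIntegral.integral_comp_mul_left (f := Real.exp) ha₀]
  simp [integral_exp, div_eq_inv_mul]

lemma row_est (ℓ a₀ T D : ℝ) (hℓ : 0 < ℓ) (ha₀ : 0 < a₀) (hD : 0 ≤ D)
    (G ωB : ℝ → ℝ) (hG : ContDiff ℝ 1 G) (hGper : Function.Periodic G ℓ)
    (hωB : ContDiff ℝ 1 ωB) (hωBper : Function.Periodic ωB ℓ)
    (σ : ℝ) (hσ : |σ| = 1)
    (x₁ x₂ : ℝ → ℝ) (hx₁ : Continuous x₁) (hx₂ : Continuous x₂)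
    (hb : ∀ u ∈ Icc (0:ℝ) T, |x₁ u - x₂ u| ≤ D)
    (ξ s : ℝ) (hs : s ∈ Icc (0:ℝ) T) :
    |(Real.exp (-a₀*s) * G (ξ + σ * x₁ s)
        + (Real.exp (-a₀*s)/ℓ) * ∫ u in (0:ℝ)..s, Real.exp (a₀*u) * ωB (ξ - σ * x₁ u + σ * x₁ s))
      - (Real.exp (-a₀*s) * G (ξ + σ * x₂ s)
        + (Real.exp (-a₀*s)/ℓ) * ∫ u in (0:ℝ)..s, Real.exp (a₀*u) * ωB (ξ - σ * x₂ u + σ * x₂ s))|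
      ≤ ((⨆ ζ : Icc (0:ℝ) ℓ, |deriv G ζ.1|)
          + (2/(a₀*ℓ)) * (⨆ ζ : Icc (0:ℝ) ℓ, |deriv ωB ζ.1|)) * D := by
  set MG := ⨆ ζ : Icc (0:ℝ) ℓ, |deriv G ζ.1| with hMG
  set Mω := ⨆ ζ : Icc (0:ℝ) ℓ, |deriv ωB ζ.1| with hMω
  have hMG0 : 0 ≤ MG := supderiv_nonneg (hG.continuous_deriv le_rfl) hℓ.le
  have hMω0 : 0 ≤ Mω := supderiv_nonneg (hωB.continuous_deriv le_rfl) hℓ.le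
  have hs0 : 0 ≤ s := hs.1
  have hE1 : Real.exp (-a₀*s) ≤ 1 := Real.exp_le_one_iff.2 (by nlinarith)
  have hE0 : 0 < Real.exp (-a₀*s) := Real.exp_pos _
  -- Term 1
  have key1 : |G (ξ + σ * x₁ s) - G (ξ + σ * x₂ s)| ≤ MG * D := by
    calc |G (ξ + σ * x₁ s) - G (ξ + σ * x₂ s)|
        ≤ MG * |(ξ + σ * x₁ s) - (ξ + σ * x₂ s)| := lip_of_periodic hℓ hG hGper _ _
      _ = MG * (|σ| * |x₁ s - x₂ s|) := by rw [← abs_mul]; ring_nf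
      _ ≤ MG * (1 * D) := by rw [hσ]; exact mul_le_mul_of_nonneg_left (by simpa using hb s hs) hMG0
      _ = MG * D := by ring
  -- Term 2
  have hI₁ : IntervalIntegrable (fun u => Real.exp (a₀*u) * ωB (ξ - σ * x₁ u + σ * x₁ s))
      volume 0 s := by
    apply Continuous.intervalIntegrable
    exact (Real.continuous_exp.comp (continuous_const.mul continuous_id)).mul
      (hωB.continuous.comp ((continuous_const.sub (continuous_const.mul hx₁)).add
        continuous_const))
  have hI₂ : IntervalIntegrable (fun u => Real.exp (a₀*u) * ωB (ξ - σ * x₂ u + σ * x₂ s))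
      volume 0 s := by
    apply Continuous.intervalIntegrable
    exact (Real.continuous_exp.comp (continuous_const.mul continuous_id)).mul
      (hωB.continuous.comp ((continuous_const.sub (continuous_const.mul hx₂)).add
        continuous_const))
  have hIg : IntervalIntegrable (fun u => Real.exp (a₀*u) * (Mω * (2*D))) volume 0 s := by
    apply Continuous.intervalIntegrable
    exact (Real.continuous_exp.comp (continuous_const.mul continuous_id)).mul continuous_const
  have hIbound : |(∫ u in (0:ℝ)..s, Real.exp (a₀*u) * ωB (ξ - σ * x₁ u + σ * x₁ s))
      - ∫ u in (0:ℝ)..s, Real.exp (a₀*u) * ωB (ξ - σ * x₂ u + σ * x₂ s)|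
      ≤ (Real.exp (a₀*s) - 1)/a₀ * (Mω * (2*D)) := by
    rw [← intervalIntegral.integral_sub hI₁ hI₂]
    have hae : ∀ᵐ u ∂(volume.restrict (Set.uIoc (0:ℝ) s)),
        ‖Real.exp (a₀*u) * ωB (ξ - σ * x₁ u + σ * x₁ s)
          - Real.exp (a₀*u) * ωB (ξ - σ * x₂ u + σ * x₂ s)‖
          ≤ Real.exp (a₀*u) * (Mω * (2*D)) := by
      refine Filter.eventually_iff_exists_mem.mpr ⟨Set.uIoc (0:ℝ) s,
        self_mem_ae_restrict measurableSet_uIoc, fun u hu => ?_⟩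
      have hu' : u ∈ Icc (0:ℝ) T := by
        rw [uIoc_of_le hs0] at hu
        exact ⟨hu.1.le, hu.2.trans hs.2⟩
      have hsT : s ∈ Icc (0:ℝ) T := hs
      have h1 : |x₁ u - x₂ u| ≤ D := hb u hu'
      have h2 : |x₁ s - x₂ s| ≤ D := hb s hsT
      rw [Real.norm_eq_abs, ← mul_sub, abs_mul, Real.abs_exp]
      refine mul_le_mul_of_nonneg_left ?_ (Real.exp_pos _).le
      calc |ωB (ξ - σ * x₁ u + σ * x₁ s) - ωB (ξ - σ * x₂ u + σ * x₂ s)|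
          ≤ Mω * |(ξ - σ * x₁ u + σ * x₁ s) - (ξ - σ * x₂ u + σ * x₂ s)| :=
            lip_of_periodic hℓ hωB hωBper _ _
        _ = Mω * (|σ| * |(x₁ s - x₂ s) - (x₁ u - x₂ u)|) := by rw [← abs_mul]; ring_nf
        _ ≤ Mω * (2*D) := by
            rw [hσ, one_mul]
            refine mul_le_mul_of_nonneg_left ?_ hMω0
            calc |(x₁ s - x₂ s) - (x₁ u - x₂ u)| ≤ |x₁ s - x₂ s| + |x₁ u - x₂ u| := abs_sub _ _
              _ ≤ 2*D := by linarith
    have := intervalIntegral.norm_integral_le_abs_of_norm_le hae hIg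
    rw [Real.norm_eq_abs] at this
    refine this.trans ?_
    rw [intervalIntegral.integral_mul_const, exp_int _ _ ha₀.ne']
    have h1exp : 1 ≤ Real.exp (a₀*s) := Real.one_le_exp (by positivity)
    rw [abs_of_nonneg (mul_nonneg (div_nonneg (by linarith) ha₀.le) (by positivity))]
  have hEe : Real.exp (-a₀*s) * Real.exp (a₀*s) = 1 := by
    rw [← Real.exp_add]; ring_nf; exact Real.exp_zero
  have h1exp : 1 ≤ Real.exp (a₀*s) := Real.one_le_exp (by positivity)
  set E := Real.exp (-a₀*s) with hEdef
  set e := Real.exp (a₀*s) with hedef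
  set G₁ := G (ξ + σ * x₁ s)
  set G₂ := G (ξ + σ * x₂ s)
  set I₁ := ∫ u in (0:ℝ)..s, Real.exp (a₀*u) * ωB (ξ - σ * x₁ u + σ * x₁ s) with hI1d
  set I₂ := ∫ u in (0:ℝ)..s, Real.exp (a₀*u) * ωB (ξ - σ * x₂ u + σ * x₂ s) with hI2d
  have expand : E * G₁ + E/ℓ * I₁ - (E * G₂ + E/ℓ * I₂)
      = E * (G₁ - G₂) + (E/ℓ) * (I₁ - I₂) := by ring
  rw [expand]
  calc |E * (G₁ - G₂) + (E/ℓ) * (I₁ - I₂)|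
      ≤ |E * (G₁ - G₂)| + |(E/ℓ) * (I₁ - I₂)| := abs_add_le _ _
    _ = E * |G₁ - G₂| + (E/ℓ) * |I₁ - I₂| := by
        rw [abs_mul, abs_mul, abs_of_pos hE0, abs_of_pos (div_pos hE0 hℓ)]
    _ ≤ 1 * (MG * D) + (E/ℓ) * ((e - 1)/a₀ * (Mω * (2*D))) := by
        refine add_le_add (mul_le_mul hE1 key1 (abs_nonneg _) zero_le_one) ?_
        exact mul_le_mul_of_nonneg_left hIbound (div_pos hE0 hℓ).le
    _ ≤ MG * D + 2/(a₀*ℓ) * Mω * D := by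
        rw [one_mul]
        have key : E/ℓ * ((e - 1)/a₀ * (Mω * (2*D))) ≤ 2/(a₀*ℓ) * Mω * D := by
          have lhs_eq : E/ℓ * ((e - 1)/a₀ * (Mω * (2*D)))
              = (E*(e-1)) * (2*(Mω*D)) / (a₀*ℓ) := by ring
          have rhs_eq : 2/(a₀*ℓ) * Mω * D = 1 * (2*(Mω*D)) / (a₀*ℓ) := by ring
          rw [lhs_eq, rhs_eq]
          have hnum : E*(e-1) ≤ 1 := by nlinarith
          have h2 : (0:ℝ) ≤ 2*(Mω*D) := by positivity
          have h3 : (0:ℝ) < a₀*ℓ := by positivity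
          gcongr
        linarith
    _ = (MG + 2/(a₀*ℓ) * Mω) * D := by ring

lemma Pint_cont (ℓ a₀ : ℝ) (ωB P₀ : ℝ → ℝ) (hωB : Continuous ωB) (hP₀ : Continuous P₀)
    (x : ℝ → ℝ) (hx : Continuous x) :
    Continuous fun p : ℝ × ℝ => Pint ℓ a₀ ωB P₀ x p.1 p.2 := by
  unfold Pint
  apply Continuous.add
  · exact ((Real.continuous_exp.comp (continuous_const.mul continuous_snd))).mul
      (hP₀.comp (continuous_fst.sub (hx.comp continuous_snd)))
  · apply Continuous.mul
    · exact (Real.continuous_exp.comp (continuous_const.mul continuous_snd)).div_const ℓ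
    · apply intervalIntegral.continuous_parametric_intervalIntegral_of_continuous
        (f := fun (p : ℝ × ℝ) u => Real.exp (a₀*u) * ωB (p.1 + x u - x p.2))
        ?_ continuous_snd
      exact (Real.continuous_exp.comp (continuous_const.mul continuous_snd)).mul
        (hωB.comp ((continuous_fst.fst.add (hx.comp continuous_snd)).sub
          (hx.comp continuous_fst.snd)))

lemma Qint_cont (ℓ a₀ : ℝ) (ωB Q₀ : ℝ → ℝ) (hωB : Continuous ωB) (hQ₀ : Continuous Q₀)
    (x : ℝ → ℝ) (hx : Continuous x) :
    Continuous fun p : ℝ × ℝ => Qint ℓ a₀ ωB Q₀ x p.1 p.2 := by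
  unfold Qint
  apply Continuous.add
  · exact ((Real.continuous_exp.comp (continuous_const.mul continuous_snd))).mul
      (hQ₀.comp (continuous_fst.add (hx.comp continuous_snd)))
  · apply Continuous.mul
    · exact (Real.continuous_exp.comp (continuous_const.mul continuous_snd)).div_const ℓ
    · apply intervalIntegral.continuous_parametric_intervalIntegral_of_continuous
        (f := fun (p : ℝ × ℝ) u => Real.exp (a₀*u) * ωB (p.1 - x u + x p.2))
        ?_ continuous_snd
      exact (Real.continuous_exp.comp (continuous_const.mul continuous_snd)).mul
        (hωB.comp ((continuous_fst.fst.sub (hx.comp continuous_snd)).add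
          (hx.comp continuous_fst.snd)))

lemma Fint_cont (ℓ k η a₀ : ℝ) (ωB ΔW P₀ Q₀ : ℝ → ℝ) (hωB : Continuous ωB)
    (hΔW' : Continuous (deriv ΔW)) (hP₀ : Continuous P₀) (hQ₀ : Continuous Q₀)
    (x : ℝ → ℝ) (hx : Continuous x) :
    Continuous (Fint ℓ k η a₀ ωB ΔW P₀ Q₀ x) := by
  unfold Fint
  apply Continuous.sub
  · apply continuous_const.mul
    apply intervalIntegral.continuous_parametric_intervalIntegral_of_continuous'
      (f := fun s ξ => (Pint ℓ a₀ ωB P₀ x ξ s - Qint ℓ a₀ ωB Q₀ x ξ s) * deriv ΔW ξ)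
    exact ((((Pint_cont ℓ a₀ ωB P₀ hωB hP₀ x hx).comp
        (continuous_snd.prodMk continuous_fst)).sub
      ((Qint_cont ℓ a₀ ωB Q₀ hωB hQ₀ x hx).comp
        (continuous_snd.prodMk continuous_fst))).mul (hΔW'.comp continuous_snd))
  · exact continuous_const.mul hx

lemma psi_cont (ℓ k η a₀ : ℝ) (ωB ΔW P₀ Q₀ : ℝ → ℝ) (hωB : Continuous ωB)
    (hΔW' : Continuous (deriv ΔW)) (hP₀ : Continuous P₀) (hQ₀ : Continuous Q₀)
    (x : ℝ → ℝ) (hx : Continuous x) :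
    Continuous (psiMap ℓ k η a₀ ωB ΔW P₀ Q₀ x) :=
  intervalIntegral.continuous_primitive
    (fun a b => ((Fint_cont ℓ k η a₀ ωB ΔW P₀ Q₀ hωB hΔW' hP₀ hQ₀ x hx).intervalIntegrable a b)) 0

lemma Fint_lip (ℓ k η a₀ T D C₁ C₂ : ℝ) (hℓ : 0 < ℓ) (hk : 0 < k) (hη : 0 < η) (ha₀ : 0 < a₀)
    (ωB ΔW P₀ Q₀ : ℝ → ℝ)
    (hωB : ContDiff ℝ 1 ωB) (hωBper : Function.Periodic ωB ℓ)
    (hΔW : ContDiff ℝ 1 ΔW)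
    (hP₀ : ContDiff ℝ 1 P₀) (hP₀per : Function.Periodic P₀ ℓ)
    (hQ₀ : ContDiff ℝ 1 Q₀) (hQ₀per : Function.Periodic Q₀ ℓ)
    (hC₁ : C₁ = 4 * max (⨆ ξ : Icc (0 : ℝ) ℓ, |deriv P₀ ξ.1|)
        (max (⨆ ξ : Icc (0 : ℝ) ℓ, |deriv Q₀ ξ.1|)
          ((2 / (a₀ * ℓ)) * ⨆ ξ : Icc (0 : ℝ) ℓ, |deriv ωB ξ.1|)))
    (hC₂ : C₂ = C₁ * ℓ / (2 * η) * (⨆ ξ : Icc (0 : ℝ) ℓ, |deriv ΔW ξ.1|) + k / η)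
    (x₁ x₂ : ℝ → ℝ) (hx₁ : Continuous x₁) (hx₂ : Continuous x₂)
    (hD : 0 ≤ D) (hb : ∀ u ∈ Icc (0:ℝ) T, |x₁ u - x₂ u| ≤ D)
    (s : ℝ) (hs : s ∈ Icc (0:ℝ) T) :
    |Fint ℓ k η a₀ ωB ΔW P₀ Q₀ x₁ s - Fint ℓ k η a₀ ωB ΔW P₀ Q₀ x₂ s| ≤ C₂ * D := by
  set MP := ⨆ ζ : Icc (0:ℝ) ℓ, |deriv P₀ ζ.1| with hMP
  set MQ := ⨆ ζ : Icc (0:ℝ) ℓ, |deriv Q₀ ζ.1| with hMQ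
  set Mω := ⨆ ζ : Icc (0:ℝ) ℓ, |deriv ωB ζ.1| with hMω
  set MW := ⨆ ζ : Icc (0:ℝ) ℓ, |deriv ΔW ζ.1| with hMW
  have hMP0 : 0 ≤ MP := supderiv_nonneg (hP₀.continuous_deriv le_rfl) hℓ.le
  have hMQ0 : 0 ≤ MQ := supderiv_nonneg (hQ₀.continuous_deriv le_rfl) hℓ.le
  have hMω0 : 0 ≤ Mω := supderiv_nonneg (hωB.continuous_deriv le_rfl) hℓ.le
  have hMW0 : 0 ≤ MW := supderiv_nonneg (hΔW.continuous_deriv le_rfl) hℓ.le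
  have hC₁0 : 0 ≤ C₁ := by
    rw [hC₁]
    have := le_max_left MP (max MQ (2/(a₀*ℓ)*Mω))
    nlinarith
  -- pointwise estimates for the row densities
  have hPe : ∀ ξ : ℝ, |Pint ℓ a₀ ωB P₀ x₁ ξ s - Pint ℓ a₀ ωB P₀ x₂ ξ s|
      ≤ (MP + 2/(a₀*ℓ) * Mω) * D := by
    intro ξ
    have hPeq : ∀ y : ℝ → ℝ, Pint ℓ a₀ ωB P₀ y ξ s
        = Real.exp (-a₀*s) * P₀ (ξ + (-1) * y s)
          + (Real.exp (-a₀*s)/ℓ)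
            * ∫ u in (0:ℝ)..s, Real.exp (a₀*u) * ωB (ξ - (-1) * y u + (-1) * y s) := by
      intro y
      unfold Pint
      simp only [neg_one_mul, sub_neg_eq_add, ← sub_eq_add_neg]
    rw [hPeq x₁, hPeq x₂]
    exact row_est ℓ a₀ T D hℓ ha₀ hD P₀ ωB hP₀ hP₀per hωB hωBper (-1) (by norm_num)
      x₁ x₂ hx₁ hx₂ hb ξ s hs
  have hQe : ∀ ξ : ℝ, |Qint ℓ a₀ ωB Q₀ x₁ ξ s - Qint ℓ a₀ ωB Q₀ x₂ ξ s|
      ≤ (MQ + 2/(a₀*ℓ) * Mω) * D := by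
    intro ξ
    have hQeq : ∀ y : ℝ → ℝ, Qint ℓ a₀ ωB Q₀ y ξ s
        = Real.exp (-a₀*s) * Q₀ (ξ + (1:ℝ) * y s)
          + (Real.exp (-a₀*s)/ℓ)
            * ∫ u in (0:ℝ)..s, Real.exp (a₀*u) * ωB (ξ - (1:ℝ) * y u + (1:ℝ) * y s) := by
      intro y
      unfold Qint
      simp only [one_mul]
    rw [hQeq x₁, hQeq x₂]
    exact row_est ℓ a₀ T D hℓ ha₀ hD Q₀ ωB hQ₀ hQ₀per hωB hωBper 1 (by norm_num)
      x₁ x₂ hx₁ hx₂ hb ξ s hs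
  have hPQ : ∀ ξ : ℝ, |(Pint ℓ a₀ ωB P₀ x₁ ξ s - Qint ℓ a₀ ωB Q₀ x₁ ξ s)
      - (Pint ℓ a₀ ωB P₀ x₂ ξ s - Qint ℓ a₀ ωB Q₀ x₂ ξ s)| ≤ C₁ * D := by
    intro ξ
    have h1 := hPe ξ
    have h2 := hQe ξ
    have habs : |(Pint ℓ a₀ ωB P₀ x₁ ξ s - Qint ℓ a₀ ωB Q₀ x₁ ξ s)
        - (Pint ℓ a₀ ωB P₀ x₂ ξ s - Qint ℓ a₀ ωB Q₀ x₂ ξ s)|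
        ≤ |Pint ℓ a₀ ωB P₀ x₁ ξ s - Pint ℓ a₀ ωB P₀ x₂ ξ s|
          + |Qint ℓ a₀ ωB Q₀ x₁ ξ s - Qint ℓ a₀ ωB Q₀ x₂ ξ s| := by
      have : (Pint ℓ a₀ ωB P₀ x₁ ξ s - Qint ℓ a₀ ωB Q₀ x₁ ξ s)
          - (Pint ℓ a₀ ωB P₀ x₂ ξ s - Qint ℓ a₀ ωB Q₀ x₂ ξ s)
          = (Pint ℓ a₀ ωB P₀ x₁ ξ s - Pint ℓ a₀ ωB P₀ x₂ ξ s)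
            - (Qint ℓ a₀ ωB Q₀ x₁ ξ s - Qint ℓ a₀ ωB Q₀ x₂ ξ s) := by ring
      rw [this]
      exact abs_sub _ _
    have hmx1 : MP ≤ max MP (max MQ (2/(a₀*ℓ)*Mω)) := le_max_left _ _
    have hmx2 : MQ ≤ max MP (max MQ (2/(a₀*ℓ)*Mω)) :=
      le_trans (le_max_left _ _) (le_max_right _ _)
    have hmx3 : 2/(a₀*ℓ)*Mω ≤ max MP (max MQ (2/(a₀*ℓ)*Mω)) :=
      le_trans (le_max_right _ _) (le_max_right _ _)
    calc |(Pint ℓ a₀ ωB P₀ x₁ ξ s - Qint ℓ a₀ ωB Q₀ x₁ ξ s)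
        - (Pint ℓ a₀ ωB P₀ x₂ ξ s - Qint ℓ a₀ ωB Q₀ x₂ ξ s)|
        ≤ (MP + 2/(a₀*ℓ) * Mω) * D + (MQ + 2/(a₀*ℓ) * Mω) * D := by linarith
      _ ≤ C₁ * D := by rw [hC₁]; nlinarith
  -- integrability in ξ
  have hcontξ : ∀ y : ℝ → ℝ, Continuous y →
      Continuous (fun ξ => (Pint ℓ a₀ ωB P₀ y ξ s - Qint ℓ a₀ ωB Q₀ y ξ s) * deriv ΔW ξ) := by
    intro y hy
    exact ((((Pint_cont ℓ a₀ ωB P₀ hωB.continuous hP₀.continuous y hy).comp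
        (continuous_id.prodMk continuous_const)).sub
      ((Qint_cont ℓ a₀ ωB Q₀ hωB.continuous hQ₀.continuous y hy).comp
        (continuous_id.prodMk continuous_const))).mul (hΔW.continuous_deriv le_rfl))
  have hint1 := ((hcontξ x₁ hx₁).intervalIntegrable (μ := volume) (0:ℝ) ℓ)
  have hint2 := ((hcontξ x₂ hx₂).intervalIntegrable (μ := volume) (0:ℝ) ℓ)
  unfold Fint
  have expand : (1 / (2 * η)) * (∫ ξ in (0:ℝ)..ℓ,
        (Pint ℓ a₀ ωB P₀ x₁ ξ s - Qint ℓ a₀ ωB Q₀ x₁ ξ s) * deriv ΔW ξ) - (k / η) * x₁ s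
      - ((1 / (2 * η)) * (∫ ξ in (0:ℝ)..ℓ,
        (Pint ℓ a₀ ωB P₀ x₂ ξ s - Qint ℓ a₀ ωB Q₀ x₂ ξ s) * deriv ΔW ξ) - (k / η) * x₂ s)
      = (1 / (2 * η)) * ((∫ ξ in (0:ℝ)..ℓ,
          (Pint ℓ a₀ ωB P₀ x₁ ξ s - Qint ℓ a₀ ωB Q₀ x₁ ξ s) * deriv ΔW ξ)
        - ∫ ξ in (0:ℝ)..ℓ, (Pint ℓ a₀ ωB P₀ x₂ ξ s - Qint ℓ a₀ ωB Q₀ x₂ ξ s) * deriv ΔW ξ)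
        - (k / η) * (x₁ s - x₂ s) := by ring
  rw [expand, ← intervalIntegral.integral_sub hint1 hint2]
  have hIb : ‖∫ ξ in (0:ℝ)..ℓ,
      ((Pint ℓ a₀ ωB P₀ x₁ ξ s - Qint ℓ a₀ ωB Q₀ x₁ ξ s) * deriv ΔW ξ
        - (Pint ℓ a₀ ωB P₀ x₂ ξ s - Qint ℓ a₀ ωB Q₀ x₂ ξ s) * deriv ΔW ξ)‖
      ≤ C₁ * D * MW * |ℓ - 0| := by
    apply intervalIntegral.norm_integral_le_of_norm_le_const
    intro ξ hξ
    have hξ' : ξ ∈ Icc (0:ℝ) ℓ := by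
      rw [uIoc_of_le hℓ.le] at hξ
      exact ⟨hξ.1.le, hξ.2⟩
    have hW : |deriv ΔW ξ| ≤ MW :=
      le_ciSup (bddAbove_absderiv (hΔW.continuous_deriv le_rfl) 0 ℓ) ⟨ξ, hξ'⟩
    rw [Real.norm_eq_abs, ← sub_mul, abs_mul]
    exact mul_le_mul (hPQ ξ) hW (abs_nonneg _) (mul_nonneg hC₁0 hD)
  rw [Real.norm_eq_abs] at hIb
  have h2η : (0:ℝ) < 1 / (2*η) := by positivity
  calc |(1 / (2 * η)) * (∫ ξ in (0:ℝ)..ℓ,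
        ((Pint ℓ a₀ ωB P₀ x₁ ξ s - Qint ℓ a₀ ωB Q₀ x₁ ξ s) * deriv ΔW ξ
          - (Pint ℓ a₀ ωB P₀ x₂ ξ s - Qint ℓ a₀ ωB Q₀ x₂ ξ s) * deriv ΔW ξ))
      - (k / η) * (x₁ s - x₂ s)|
      ≤ (1 / (2 * η)) * |∫ ξ in (0:ℝ)..ℓ,
          ((Pint ℓ a₀ ωB P₀ x₁ ξ s - Qint ℓ a₀ ωB Q₀ x₁ ξ s) * deriv ΔW ξ
            - (Pint ℓ a₀ ωB P₀ x₂ ξ s - Qint ℓ a₀ ωB Q₀ x₂ ξ s) * deriv ΔW ξ)|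
        + (k / η) * |x₁ s - x₂ s| := by
          refine le_trans (abs_sub _ _) ?_
          rw [abs_mul, abs_mul, abs_of_pos h2η,
            abs_of_pos (by positivity : (0:ℝ) < k/η)]
    _ ≤ (1 / (2 * η)) * (C₁ * D * MW * |ℓ - 0|) + (k / η) * D := by
        refine add_le_add (mul_le_mul_of_nonneg_left hIb h2η.le) ?_
        exact mul_le_mul_of_nonneg_left (hb s hs) (by positivity)
    _ = C₂ * D := by
        rw [hC₂, abs_of_pos (by linarith : (0:ℝ) < ℓ - 0)]
        ring

lemma C2_pos (ℓ k η a₀ C₁ C₂ : ℝ) (hℓ : 0 < ℓ) (hk : 0 < k) (hη : 0 < η) (ha₀ : 0 < a₀)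
    (ωB ΔW P₀ Q₀ : ℝ → ℝ)
    (hωB : ContDiff ℝ 1 ωB) (hΔW : ContDiff ℝ 1 ΔW) (hP₀ : ContDiff ℝ 1 P₀)
    (hQ₀ : ContDiff ℝ 1 Q₀)
    (hC₁ : C₁ = 4 * max (⨆ ξ : Icc (0 : ℝ) ℓ, |deriv P₀ ξ.1|)
        (max (⨆ ξ : Icc (0 : ℝ) ℓ, |deriv Q₀ ξ.1|)
          ((2 / (a₀ * ℓ)) * ⨆ ξ : Icc (0 : ℝ) ℓ, |deriv ωB ξ.1|)))
    (hC₂ : C₂ = C₁ * ℓ / (2 * η) * (⨆ ξ : Icc (0 : ℝ) ℓ, |deriv ΔW ξ.1|) + k / η) :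
    0 < C₂ := by
  have hMP0 : 0 ≤ ⨆ ζ : Icc (0:ℝ) ℓ, |deriv P₀ ζ.1| :=
    supderiv_nonneg (hP₀.continuous_deriv le_rfl) hℓ.le
  have hMW0 : 0 ≤ ⨆ ζ : Icc (0:ℝ) ℓ, |deriv ΔW ζ.1| :=
    supderiv_nonneg (hΔW.continuous_deriv le_rfl) hℓ.le
  have hC₁0 : 0 ≤ C₁ := by
    rw [hC₁]
    have := le_max_left (⨆ ζ : Icc (0:ℝ) ℓ, |deriv P₀ ζ.1|)
      (max (⨆ ζ : Icc (0:ℝ) ℓ, |deriv Q₀ ζ.1|)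
        ((2 / (a₀ * ℓ)) * ⨆ ζ : Icc (0:ℝ) ℓ, |deriv ωB ζ.1|))
    nlinarith
  rw [hC₂]
  have h1 : 0 ≤ C₁ * ℓ / (2 * η) * (⨆ ξ : Icc (0 : ℝ) ℓ, |deriv ΔW ξ.1|) := by positivity
  have h2 : 0 < k / η := by positivity
  linarith

lemma psi_est (ℓ k η a₀ T D C₁ C₂ : ℝ) (hℓ : 0 < ℓ) (hk : 0 < k) (hη : 0 < η) (ha₀ : 0 < a₀)
    (ωB ΔW P₀ Q₀ : ℝ → ℝ)
    (hωB : ContDiff ℝ 1 ωB) (hωBper : Function.Periodic ωB ℓ)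
    (hΔW : ContDiff ℝ 1 ΔW)
    (hP₀ : ContDiff ℝ 1 P₀) (hP₀per : Function.Periodic P₀ ℓ)
    (hQ₀ : ContDiff ℝ 1 Q₀) (hQ₀per : Function.Periodic Q₀ ℓ)
    (hC₁ : C₁ = 4 * max (⨆ ξ : Icc (0 : ℝ) ℓ, |deriv P₀ ξ.1|)
        (max (⨆ ξ : Icc (0 : ℝ) ℓ, |deriv Q₀ ξ.1|)
          ((2 / (a₀ * ℓ)) * ⨆ ξ : Icc (0 : ℝ) ℓ, |deriv ωB ξ.1|)))
    (hC₂ : C₂ = C₁ * ℓ / (2 * η) * (⨆ ξ : Icc (0 : ℝ) ℓ, |deriv ΔW ξ.1|) + k / η)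
    (hT : T = 1 / (2 * C₂))
    (x₁ x₂ : ℝ → ℝ) (hx₁ : Continuous x₁) (hx₂ : Continuous x₂)
    (hD : 0 ≤ D) (hb : ∀ u ∈ Icc (0:ℝ) T, |x₁ u - x₂ u| ≤ D)
    (t : ℝ) (ht : t ∈ Icc (0:ℝ) T) :
    |psiMap ℓ k η a₀ ωB ΔW P₀ Q₀ x₁ t - psiMap ℓ k η a₀ ωB ΔW P₀ Q₀ x₂ t| ≤ (1/2) * D := by
  have hC₂0 : 0 < C₂ := C2_pos ℓ k η a₀ C₁ C₂ hℓ hk hη ha₀ ωB ΔW P₀ Q₀ hωB hΔW hP₀ hQ₀ hC₁ hC₂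
  have ht0 : 0 ≤ t := ht.1
  have hF1 : IntervalIntegrable (Fint ℓ k η a₀ ωB ΔW P₀ Q₀ x₁) volume 0 t :=
    (Fint_cont ℓ k η a₀ ωB ΔW P₀ Q₀ hωB.continuous (hΔW.continuous_deriv le_rfl)
      hP₀.continuous hQ₀.continuous x₁ hx₁).intervalIntegrable _ _
  have hF2 : IntervalIntegrable (Fint ℓ k η a₀ ωB ΔW P₀ Q₀ x₂) volume 0 t :=
    (Fint_cont ℓ k η a₀ ωB ΔW P₀ Q₀ hωB.continuous (hΔW.continuous_deriv le_rfl)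
      hP₀.continuous hQ₀.continuous x₂ hx₂).intervalIntegrable _ _
  unfold psiMap
  rw [← intervalIntegral.integral_sub hF1 hF2]
  have hb2 : ‖∫ s in (0:ℝ)..t, (Fint ℓ k η a₀ ωB ΔW P₀ Q₀ x₁ s
      - Fint ℓ k η a₀ ωB ΔW P₀ Q₀ x₂ s)‖ ≤ C₂ * D * |t - 0| := by
    apply intervalIntegral.norm_integral_le_of_norm_le_const
    intro s hsI
    rw [uIoc_of_le ht0] at hsI
    have hs' : s ∈ Icc (0:ℝ) T := ⟨hsI.1.le, hsI.2.trans ht.2⟩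
    rw [Real.norm_eq_abs]
    exact Fint_lip ℓ k η a₀ T D C₁ C₂ hℓ hk hη ha₀ ωB ΔW P₀ Q₀ hωB hωBper hΔW hP₀ hP₀per
      hQ₀ hQ₀per hC₁ hC₂ x₁ x₂ hx₁ hx₂ hD hb s hs'
  rw [Real.norm_eq_abs] at hb2
  refine hb2.trans ?_
  rw [abs_of_nonneg (by linarith : (0:ℝ) ≤ t - 0)]
  have htT : t ≤ T := ht.2
  have hTC : C₂ * T = 1/2 := by rw [hT]; field_simp
  nlinarith [mul_nonneg hC₂0.le hD]

lemma Fint_congr (ℓ k η a₀ T : ℝ) (ωB ΔW P₀ Q₀ : ℝ → ℝ) (x y : ℝ → ℝ)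
    (hxy : ∀ u ∈ Icc (0:ℝ) T, x u = y u) (s : ℝ) (hs : s ∈ Icc (0:ℝ) T) :
    Fint ℓ k η a₀ ωB ΔW P₀ Q₀ x s = Fint ℓ k η a₀ ωB ΔW P₀ Q₀ y s := by
  have hxs : x s = y s := hxy s hs
  have hP : ∀ ξ, Pint ℓ a₀ ωB P₀ x ξ s = Pint ℓ a₀ ωB P₀ y ξ s := by
    intro ξ
    unfold Pint
    rw [hxs]
    congr 1
    congr 1
    apply intervalIntegral.integral_congr
    intro u hu
    rw [uIcc_of_le hs.1] at hu
    simp only [hxy u ⟨hu.1, hu.2.trans hs.2⟩]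
  have hQ : ∀ ξ, Qint ℓ a₀ ωB Q₀ x ξ s = Qint ℓ a₀ ωB Q₀ y ξ s := by
    intro ξ
    unfold Qint
    rw [hxs]
    congr 1
    congr 1
    apply intervalIntegral.integral_congr
    intro u hu
    rw [uIcc_of_le hs.1] at hu
    simp only [hxy u ⟨hu.1, hu.2.trans hs.2⟩]
  unfold Fint
  rw [hxs]
  congr 2
  apply intervalIntegral.integral_congr
  intro ξ _
  simp only [hP, hQ]

lemma psi_congr (ℓ k η a₀ T : ℝ) (ωB ΔW P₀ Q₀ : ℝ → ℝ) (x y : ℝ → ℝ)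
    (hxy : ∀ u ∈ Icc (0:ℝ) T, x u = y u) (t : ℝ) (ht : t ∈ Icc (0:ℝ) T) :
    psiMap ℓ k η a₀ ωB ΔW P₀ Q₀ x t = psiMap ℓ k η a₀ ωB ΔW P₀ Q₀ y t := by
  unfold psiMap
  apply intervalIntegral.integral_congr
  intro s hsI
  rw [uIcc_of_le ht.1] at hsI
  exact Fint_congr ℓ k η a₀ T ωB ΔW P₀ Q₀ x y hxy s ⟨hsI.1, hsI.2.trans ht.2⟩

/-- **Contraction property of the Picard map**, with the explicit constants
`C₁ = 4·max{‖P₀'‖_∞, ‖Q₀'‖_∞, (2/(a₀ℓ))‖ω_B'‖_∞}`,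
`C₂ = (C₁ℓ/(2η))‖ΔW'‖_∞ + k/η` and `T = 1/(2 C₂)`; in particular `ψ` has a
unique fixed point among continuous functions on `[0,T]` vanishing at `0`. -/
theorem psi_contraction
    (ℓ k η a₀ : ℝ) (hℓ : 0 < ℓ) (hk : 0 < k) (hη : 0 < η) (ha₀ : 0 < a₀)
    (ωB ΔW P₀ Q₀ : ℝ → ℝ)
    (hωB : ContDiff ℝ 1 ωB) (hωBper : Function.Periodic ωB ℓ)
    (hΔW : ContDiff ℝ 1 ΔW) (hΔWper : Function.Periodic ΔW ℓ)
    (hP₀ : ContDiff ℝ 1 P₀) (hP₀per : Function.Periodic P₀ ℓ)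
    (hQ₀ : ContDiff ℝ 1 Q₀) (hQ₀per : Function.Periodic Q₀ ℓ)
    (C₁ C₂ T : ℝ)
    (hC₁ : C₁ = 4 * max (⨆ ξ : Icc (0 : ℝ) ℓ, |deriv P₀ ξ.1|)
        (max (⨆ ξ : Icc (0 : ℝ) ℓ, |deriv Q₀ ξ.1|)
          ((2 / (a₀ * ℓ)) * ⨆ ξ : Icc (0 : ℝ) ℓ, |deriv ωB ξ.1|)))
    (hC₂ : C₂ = C₁ * ℓ / (2 * η) * (⨆ ξ : Icc (0 : ℝ) ℓ, |deriv ΔW ξ.1|) + k / η)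
    (hT : T = 1 / (2 * C₂)) :
    (∀ x₁ x₂ : ℝ → ℝ, ContinuousOn x₁ (Icc 0 T) → x₁ 0 = 0 →
        ContinuousOn x₂ (Icc 0 T) → x₂ 0 = 0 →
        ∀ t ∈ Icc (0 : ℝ) T,
          |psiMap ℓ k η a₀ ωB ΔW P₀ Q₀ x₁ t - psiMap ℓ k η a₀ ωB ΔW P₀ Q₀ x₂ t|
            ≤ (1 / 2) * ⨆ s : Icc (0 : ℝ) T, |x₁ s.1 - x₂ s.1|) ∧
    (∃ x : ℝ → ℝ,
      (ContinuousOn x (Icc 0 T) ∧ x 0 = 0 ∧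
        ∀ t ∈ Icc (0 : ℝ) T, x t = psiMap ℓ k η a₀ ωB ΔW P₀ Q₀ x t) ∧
      ∀ x' : ℝ → ℝ,
        (ContinuousOn x' (Icc 0 T) ∧ x' 0 = 0 ∧
          ∀ t ∈ Icc (0 : ℝ) T, x' t = psiMap ℓ k η a₀ ωB ΔW P₀ Q₀ x' t) →
        ∀ t ∈ Icc (0 : ℝ) T, x t = x' t) := by
  have hC₂0 : 0 < C₂ := C2_pos ℓ k η a₀ C₁ C₂ hℓ hk hη ha₀ ωB ΔW P₀ Q₀ hωB hΔW hP₀ hQ₀ hC₁ hC₂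
  have hT0 : 0 < T := by rw [hT]; positivity
  have h0T : (0:ℝ) ∈ Icc (0:ℝ) T := left_mem_Icc.2 hT0.le
  -- Part 1
  have part1 : ∀ x₁ x₂ : ℝ → ℝ, ContinuousOn x₁ (Icc 0 T) →
      ContinuousOn x₂ (Icc 0 T) →
      ∀ t ∈ Icc (0 : ℝ) T,
        |psiMap ℓ k η a₀ ωB ΔW P₀ Q₀ x₁ t - psiMap ℓ k η a₀ ωB ΔW P₀ Q₀ x₂ t|
          ≤ (1 / 2) * ⨆ s : Icc (0 : ℝ) T, |x₁ s.1 - x₂ s.1| := by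
    intro x₁ x₂ hc₁ hc₂ t ht
    set x₁' : ℝ → ℝ := IccExtend hT0.le ((Icc (0:ℝ) T).restrict x₁) with hx₁'
    set x₂' : ℝ → ℝ := IccExtend hT0.le ((Icc (0:ℝ) T).restrict x₂) with hx₂'
    have heq₁ : ∀ u ∈ Icc (0:ℝ) T, x₁' u = x₁ u := fun u hu => by
      rw [hx₁', IccExtend_of_mem _ _ hu]; rfl
    have heq₂ : ∀ u ∈ Icc (0:ℝ) T, x₂' u = x₂ u := fun u hu => by
      rw [hx₂', IccExtend_of_mem _ _ hu]; rfl
    have hcx₁ : Continuous x₁' := hc₁.restrict.Icc_extend'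
    have hcx₂ : Continuous x₂' := hc₂.restrict.Icc_extend'
    set D := ⨆ s : Icc (0 : ℝ) T, |x₁ s.1 - x₂ s.1| with hDdef
    have hDbdd : BddAbove (Set.range fun s : Icc (0:ℝ) T => |x₁ s.1 - x₂ s.1|) := by
      have h := (isCompact_Icc (a := (0:ℝ)) (b := T)).bddAbove_image
        (f := fun y => |x₁ y - x₂ y|) ((hc₁.sub hc₂).abs)
      rwa [Set.image_eq_range] at h
    have hD0 : 0 ≤ D := le_trans (abs_nonneg _) (le_ciSup hDbdd ⟨0, h0T⟩)
    have hb : ∀ u ∈ Icc (0:ℝ) T, |x₁' u - x₂' u| ≤ D := by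
      intro u hu
      rw [heq₁ u hu, heq₂ u hu]
      exact le_ciSup hDbdd ⟨u, hu⟩
    have hcong₁ := psi_congr ℓ k η a₀ T ωB ΔW P₀ Q₀ x₁ x₁'
      (fun u hu => (heq₁ u hu).symm) t ht
    have hcong₂ := psi_congr ℓ k η a₀ T ωB ΔW P₀ Q₀ x₂ x₂'
      (fun u hu => (heq₂ u hu).symm) t ht
    rw [hcong₁, hcong₂]
    exact psi_est ℓ k η a₀ T D C₁ C₂ hℓ hk hη ha₀ ωB ΔW P₀ Q₀ hωB hωBper hΔW hP₀ hP₀per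
      hQ₀ hQ₀per hC₁ hC₂ hT x₁' x₂' hcx₁ hcx₂ hD0 hb t ht
  refine ⟨fun x₁ x₂ hc₁ _ hc₂ _ => part1 x₁ x₂ hc₁ hc₂, ?_⟩
  -- Part 2 : existence and uniqueness of the fixed point
  have hNE : Nonempty (Icc (0:ℝ) T) := ⟨⟨0, h0T⟩⟩
  set ext : C(Icc (0:ℝ) T, ℝ) → ℝ → ℝ := fun f => IccExtend hT0.le ⇑f with hext
  have hextc : ∀ f : C(Icc (0:ℝ) T, ℝ), Continuous (ext f) := fun f => f.continuous.Icc_extend'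
  set Ψ : C(Icc (0:ℝ) T, ℝ) → C(Icc (0:ℝ) T, ℝ) := fun f =>
    ⟨fun t => psiMap ℓ k η a₀ ωB ΔW P₀ Q₀ (ext f) t.1,
      ((psi_cont ℓ k η a₀ ωB ΔW P₀ Q₀ hωB.continuous (hΔW.continuous_deriv le_rfl)
        hP₀.continuous hQ₀.continuous (ext f) (hextc f)).comp continuous_subtype_val)⟩
    with hΨ
  have hcontr : ∀ f g : C(Icc (0:ℝ) T, ℝ), dist (Ψ f) (Ψ g) ≤ (1/2) * dist f g := by
    intro f g
    rw [ContinuousMap.dist_le (by positivity)]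
    intro t
    rw [Real.dist_eq]
    have hbfg : ∀ u ∈ Icc (0:ℝ) T, |ext f u - ext g u| ≤ dist f g := by
      intro u hu
      rw [hext]
      simp only [IccExtend_of_mem _ _ hu]
      rw [← Real.dist_eq]
      exact ContinuousMap.dist_apply_le_dist _
    exact psi_est ℓ k η a₀ T (dist f g) C₁ C₂ hℓ hk hη ha₀ ωB ΔW P₀ Q₀ hωB hωBper hΔW hP₀
      hP₀per hQ₀ hQ₀per hC₁ hC₂ hT (ext f) (ext g) (hextc f) (hextc g) dist_nonneg hbfg t.1 t.2
  have hlip : LipschitzWith (1/2 : ℝ≥0) Ψ := LipschitzWith.of_dist_le_mul fun f g => by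
    refine le_trans (hcontr f g) (le_of_eq ?_)
    norm_num
  have hcw : ContractingWith (1/2 : ℝ≥0) Ψ :=
    ⟨by exact_mod_cast (by norm_num : ((1:ℝ)/2) < 1), hlip⟩
  set xc : C(Icc (0:ℝ) T, ℝ) := ContractingWith.fixedPoint Ψ hcw with hxc
  have hfix : Ψ xc = xc := hcw.fixedPoint_isFixedPt
  set x : ℝ → ℝ := ext xc with hx
  have hxmem : ∀ u : Icc (0:ℝ) T, x u.1 = xc u := by
    intro u
    rw [hx, hext]
    simp only [IccExtend_of_mem _ _ u.2]
  have hxfix : ∀ t ∈ Icc (0:ℝ) T, x t = psiMap ℓ k η a₀ ωB ΔW P₀ Q₀ x t := by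
    intro t ht
    have h1 : x t = xc ⟨t, ht⟩ := hxmem ⟨t, ht⟩
    have h2 : (Ψ xc) ⟨t, ht⟩ = xc ⟨t, ht⟩ := by rw [hfix]
    rw [h1, ← h2, hΨ]
    rfl
  have hxcont : ContinuousOn x (Icc 0 T) := (hextc xc).continuousOn
  have hx0 : x 0 = 0 := by
    rw [hxfix 0 h0T]
    unfold psiMap
    exact intervalIntegral.integral_same
  refine ⟨x, ⟨hxcont, hx0, hxfix⟩, ?_⟩
  rintro x' ⟨hc', h0', hfix'⟩ t ht
  set D' := ⨆ s : Icc (0 : ℝ) T, |x s.1 - x' s.1| with hD'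
  have hest : ∀ u ∈ Icc (0:ℝ) T, |x u - x' u| ≤ (1/2) * D' := by
    intro u hu
    rw [hxfix u hu, hfix' u hu]
    exact part1 x x' hxcont hc' u hu
  have hD'le : D' ≤ (1/2) * D' := ciSup_le fun s => hest s.1 s.2
  have hD'0 : D' ≤ 0 := by linarith
  have := hest t ht
  have habs : |x t - x' t| ≤ 0 := by linarith
  have := abs_nonpos_iff.mp habs
  linarith [sub_eq_zero.mp this, this]
end

section
/- A priori C¹ bound: for any continuous x : [0,∞) → ℝ with x(0)=0 and any t ≥ 0, the function ξ ↦ P_x(ξ,t) satisfies ‖P_x(·,t)‖_{C¹} ≤ e^{−a₀t}‖P₀‖_{C¹} + (1 − e^{−a₀t})(1/(a₀ℓ))‖ω_B‖_{C¹}, where ‖f‖_{C¹} = ‖f‖_∞ + ‖f'‖_∞ (sup norms over one period). In particular sup_{t≥0}‖P_x(·,t)‖_{C¹} ≤ max(‖P₀‖_{C¹}, (1/(a₀ℓ))‖ω_B‖_{C¹}). -/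
open Real Set

section AuxiliaryLemmas

lemma bddAbove_aux {ℓ : ℝ} {g : ℝ → ℝ} (hg : Continuous g) :
    BddAbove (Set.range fun ξ : Set.Icc (0:ℝ) ℓ => |g ξ.1|) := by
  rw [show (fun ξ : Set.Icc (0:ℝ) ℓ => |g ξ.1|) = (fun y => |g y|) ∘ Subtype.val from rfl,
    Set.range_comp, Subtype.range_coe]
  exact IsCompact.bddAbove_image isCompact_Icc (hg.abs.continuousOn)

lemma per_abs_le {ℓ : ℝ} (hℓ : 0 < ℓ) {g : ℝ → ℝ} (hg : Continuous g)
    (hper : Function.Periodic g ℓ) (y : ℝ) :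
    |g y| ≤ ⨆ ξ : Set.Icc (0:ℝ) ℓ, |g ξ.1| := by
  obtain ⟨z, hz, hzy⟩ := hper.exists_mem_Ico₀ hℓ y
  rw [hzy]
  exact le_ciSup (bddAbove_aux hg) ⟨z, hz.1, hz.2.le⟩

lemma sup_nonneg_aux {ℓ : ℝ} (hℓ : 0 < ℓ) {g : ℝ → ℝ} (hg : Continuous g) :
    0 ≤ ⨆ ξ : Set.Icc (0:ℝ) ℓ, |g ξ.1| :=
  le_trans (abs_nonneg _) (le_ciSup (bddAbove_aux hg) ⟨0, le_refl 0, hℓ.le⟩)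

lemma per_deriv {f : ℝ → ℝ} {c : ℝ} (h : Function.Periodic f c) :
    Function.Periodic (deriv f) c := by
  intro x
  have hfe : (fun y => f (y + c)) = f := funext h
  calc deriv f (x + c) = deriv (fun y => f (y + c)) x := (deriv_comp_add_const f c x).symm
    _ = deriv f x := by rw [hfe]

lemma int_exp_aux {a₀ : ℝ} (ha₀ : 0 < a₀) (t : ℝ) :
    ∫ s in (0:ℝ)..t, Real.exp (a₀ * s) = (Real.exp (a₀ * t) - 1) / a₀ := by
  have h : ∀ s ∈ Set.uIcc (0:ℝ) t,
      HasDerivAt (fun s => Real.exp (a₀ * s) / a₀) (Real.exp (a₀ * s)) s := by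
    intro s _
    have h1 : HasDerivAt (fun s : ℝ => a₀ * s) a₀ s := by
      simpa using (hasDerivAt_id s).const_mul a₀
    have h2 := (Real.hasDerivAt_exp (a₀ * s)).comp s h1
    have := h2.div_const a₀
    simpa [mul_div_assoc, mul_div_cancel_right₀, ha₀.ne'] using this
  rw [intervalIntegral.integral_eq_sub_of_hasDerivAt h
    ((Real.continuous_exp.comp (continuous_const.mul continuous_id)).intervalIntegrable 0 t)]
  simp [sub_div]

lemma cont_integrand {g x : ℝ → ℝ} (hg : Continuous g) (hx : ContinuousOn x (Ici 0))
    (a₀ ξ t : ℝ) :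
    ContinuousOn (fun s => Real.exp (a₀ * s) * g (ξ + x s - x t)) (Set.Icc 0 t) :=
  ((Real.continuous_exp.comp (continuous_const.mul continuous_id)).continuousOn).mul
    (hg.comp_continuousOn (((continuousOn_const.add
      (hx.mono (Set.Icc_subset_Ici_self))).sub continuousOn_const)))

lemma key_bound (ℓ a₀ : ℝ) (hℓ : 0 < ℓ) (ha₀ : 0 < a₀)
    (f g : ℝ → ℝ) (hf : Continuous f) (hfper : Function.Periodic f ℓ)
    (hg : Continuous g) (hgper : Function.Periodic g ℓ)
    (x : ℝ → ℝ) (hx : ContinuousOn x (Ici 0)) {t : ℝ} (ht : 0 ≤ t) (ξ : ℝ) :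
    |Real.exp (-a₀ * t) * f (ξ - x t)
      + (Real.exp (-a₀ * t) / ℓ) * ∫ s in (0:ℝ)..t, Real.exp (a₀ * s) * g (ξ + x s - x t)|
      ≤ Real.exp (-a₀ * t) * (⨆ ξ : Set.Icc (0:ℝ) ℓ, |f ξ.1|)
        + (1 - Real.exp (-a₀ * t)) * (1/(a₀ * ℓ)) * (⨆ ξ : Set.Icc (0:ℝ) ℓ, |g ξ.1|) := by
  set Sf := ⨆ ξ : Set.Icc (0:ℝ) ℓ, |f ξ.1| with hSf
  set Sg := ⨆ ξ : Set.Icc (0:ℝ) ℓ, |g ξ.1| with hSg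
  have hSg0 : 0 ≤ Sg := sup_nonneg_aux hℓ hg
  have hcont := cont_integrand hg hx a₀ ξ t
  have hint : IntervalIntegrable (fun s => Real.exp (a₀ * s) * g (ξ + x s - x t))
      MeasureTheory.volume 0 t :=
    (by rwa [Set.uIcc_of_le ht] : ContinuousOn _ (Set.uIcc 0 t)).intervalIntegrable
  have hintb : IntervalIntegrable (fun s => Real.exp (a₀ * s) * Sg) MeasureTheory.volume 0 t :=
    ((Real.continuous_exp.comp (continuous_const.mul continuous_id)).mul
      continuous_const).intervalIntegrable 0 t
  have habs : |∫ s in (0:ℝ)..t, Real.exp (a₀ * s) * g (ξ + x s - x t)|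
      ≤ Sg * (Real.exp (a₀ * t) - 1) / a₀ := by
    calc |∫ s in (0:ℝ)..t, Real.exp (a₀ * s) * g (ξ + x s - x t)|
        ≤ ∫ s in (0:ℝ)..t, |Real.exp (a₀ * s) * g (ξ + x s - x t)| :=
          intervalIntegral.abs_integral_le_integral_abs ht
      _ ≤ ∫ s in (0:ℝ)..t, Real.exp (a₀ * s) * Sg := by
          apply intervalIntegral.integral_mono_on ht (hint.abs) hintb
          intro s _
          rw [abs_mul, abs_of_pos (Real.exp_pos _)]
          exact mul_le_mul_of_nonneg_left (per_abs_le hℓ hg hgper _) (Real.exp_pos _).le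
      _ = Sg * (Real.exp (a₀ * t) - 1) / a₀ := by
          rw [intervalIntegral.integral_mul_const, int_exp_aux ha₀]
          ring
  have hexp1 : Real.exp (-a₀ * t) * Real.exp (a₀ * t) = 1 := by
    rw [← Real.exp_add]; ring_nf; exact Real.exp_zero
  have he0 : (0:ℝ) < Real.exp (-a₀ * t) / ℓ := div_pos (Real.exp_pos _) hℓ
  calc |Real.exp (-a₀ * t) * f (ξ - x t)
      + (Real.exp (-a₀ * t) / ℓ) * ∫ s in (0:ℝ)..t, Real.exp (a₀ * s) * g (ξ + x s - x t)|
      ≤ |Real.exp (-a₀ * t) * f (ξ - x t)|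
        + |(Real.exp (-a₀ * t) / ℓ) * ∫ s in (0:ℝ)..t, Real.exp (a₀ * s) * g (ξ + x s - x t)| :=
        abs_add_le _ _
    _ ≤ Real.exp (-a₀ * t) * Sf
        + (Real.exp (-a₀ * t) / ℓ) * (Sg * (Real.exp (a₀ * t) - 1) / a₀) := by
        gcongr
        · rw [abs_mul, abs_of_pos (Real.exp_pos _)]
          exact mul_le_mul_of_nonneg_left (per_abs_le hℓ hf hfper _) (Real.exp_pos _).le
        · rw [abs_mul, abs_of_pos he0]
          exact mul_le_mul_of_nonneg_left habs he0.le
    _ = Real.exp (-a₀ * t) * Sf + (1 - Real.exp (-a₀ * t)) * (1/(a₀ * ℓ)) * Sg := by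
        field_simp
        simp only [neg_mul] at hexp1 ⊢
        linear_combination Sg * hexp1

end AuxiliaryLemmas

/-- The `C¹` norm of a function over one period `[0,ℓ]`:
`‖f‖_{C¹} = ‖f‖_∞ + ‖f'‖_∞`. -/
noncomputable def C1Norm (ℓ : ℝ) (f : ℝ → ℝ) : ℝ :=
  (⨆ ξ : Set.Icc (0 : ℝ) ℓ, |f ξ.1|) + ⨆ ξ : Set.Icc (0 : ℝ) ℓ, |deriv f ξ.1|

lemma hasDeriv_Pint (ℓ a₀ : ℝ) (hℓ : 0 < ℓ) (ωB P₀ x : ℝ → ℝ)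
    (hωB : ContDiff ℝ 1 ωB) (hωBper : Function.Periodic ωB ℓ)
    (hP₀ : ContDiff ℝ 1 P₀)
    (hx : ContinuousOn x (Ici 0)) {t : ℝ} (ht : 0 ≤ t) (ξ : ℝ) :
    HasDerivAt (fun ξ => Pint ℓ a₀ ωB P₀ x ξ t)
      (Real.exp (-a₀ * t) * deriv P₀ (ξ - x t)
        + (Real.exp (-a₀ * t) / ℓ)
          * ∫ s in (0:ℝ)..t, Real.exp (a₀ * s) * deriv ωB (ξ + x s - x t)) ξ := by
  have hωB' : Continuous (deriv ωB) := hωB.continuous_deriv le_rfl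
  have hsub : Set.uIoc (0:ℝ) t ⊆ Set.Icc 0 t := by
    rw [Set.uIoc_of_le ht]; exact Set.Ioc_subset_Icc_self
  have hP' : HasDerivAt P₀ (deriv P₀ (ξ - x t)) (ξ - x t) :=
    (hP₀.differentiable one_ne_zero (ξ - x t)).hasDerivAt
  have hinner : HasDerivAt (fun ξ : ℝ => ξ - x t) 1 ξ := (hasDerivAt_id ξ).sub_const _
  have hA : HasDerivAt (fun ξ => Real.exp (-a₀ * t) * P₀ (ξ - x t))
      (Real.exp (-a₀ * t) * deriv P₀ (ξ - x t)) ξ := by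
    simpa using (hP'.comp ξ hinner).const_mul (Real.exp (-a₀ * t))
  set SD := ⨆ ξ : Set.Icc (0:ℝ) ℓ, |deriv ωB ξ.1| with hSD
  have hB0 : HasDerivAt (fun ξ' => ∫ s in (0:ℝ)..t, Real.exp (a₀ * s) * ωB (ξ' + x s - x t))
      (∫ s in (0:ℝ)..t, Real.exp (a₀ * s) * deriv ωB (ξ + x s - x t)) ξ := by
    refine (intervalIntegral.hasDerivAt_integral_of_dominated_loc_of_deriv_le
      (F := fun ξ' s => Real.exp (a₀ * s) * ωB (ξ' + x s - x t))
      (F' := fun ξ' s => Real.exp (a₀ * s) * deriv ωB (ξ' + x s - x t))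
      (bound := fun s => Real.exp (a₀ * s) * SD) (Metric.ball_mem_nhds ξ one_pos) ?_ ?_ ?_ ?_ ?_ ?_).2
    · exact Filter.Eventually.of_forall fun ξ' =>
        (((cont_integrand hωB.continuous hx a₀ ξ' t).mono hsub).aestronglyMeasurable
          measurableSet_uIoc)
    · have hcc : ContinuousOn (fun s => Real.exp (a₀ * s) * ωB (ξ + x s - x t))
          (Set.uIcc 0 t) := by
        rw [Set.uIcc_of_le ht]; exact cont_integrand hωB.continuous hx a₀ ξ t
      exact hcc.intervalIntegrable
    · exact (((cont_integrand hωB' hx a₀ ξ t).mono hsub).aestronglyMeasurable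
        measurableSet_uIoc)
    · refine MeasureTheory.ae_of_all _ fun s _ ξ' _ => ?_
      rw [Real.norm_eq_abs, abs_mul, abs_of_pos (Real.exp_pos _)]
      exact mul_le_mul_of_nonneg_left
        (per_abs_le hℓ hωB' (per_deriv hωBper) _) (Real.exp_pos _).le
    · exact ((Real.continuous_exp.comp (continuous_const.mul continuous_id)).mul
        continuous_const).intervalIntegrable 0 t
    · refine MeasureTheory.ae_of_all _ fun s _ ξ' _ => ?_
      have h1 : HasDerivAt ωB (deriv ωB (ξ' + x s - x t)) (ξ' + x s - x t) :=
        (hωB.differentiable one_ne_zero (ξ' + x s - x t)).hasDerivAt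
      have h2 : HasDerivAt (fun ξ' : ℝ => ξ' + x s - x t) 1 ξ' :=
        ((hasDerivAt_id ξ').add_const _).sub_const _
      simpa using (h1.comp ξ' h2).const_mul (Real.exp (a₀ * s))
  have hB := hB0.const_mul (Real.exp (-a₀ * t) / ℓ)
  have := hA.add hB
  simpa [Pint, Pi.add_def] using this

lemma deriv_Pint (ℓ a₀ : ℝ) (hℓ : 0 < ℓ) (ωB P₀ x : ℝ → ℝ)
    (hωB : ContDiff ℝ 1 ωB) (hωBper : Function.Periodic ωB ℓ)
    (hP₀ : ContDiff ℝ 1 P₀)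
    (hx : ContinuousOn x (Ici 0)) {t : ℝ} (ht : 0 ≤ t) (ξ : ℝ) :
    deriv (fun ξ => Pint ℓ a₀ ωB P₀ x ξ t) ξ
      = Real.exp (-a₀ * t) * deriv P₀ (ξ - x t)
        + (Real.exp (-a₀ * t) / ℓ)
          * ∫ s in (0:ℝ)..t, Real.exp (a₀ * s) * deriv ωB (ξ + x s - x t) :=
  (hasDeriv_Pint ℓ a₀ hℓ ωB P₀ x hωB hωBper hP₀ hx ht ξ).deriv

/-- **A priori `C¹` bound**: for any continuous `x : [0,∞) → ℝ` with `x(0) = 0`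
and any `t ≥ 0`,
`‖P_x(·,t)‖_{C¹} ≤ e^{−a₀t}‖P₀‖_{C¹} + (1 − e^{−a₀t})(1/(a₀ℓ))‖ω_B‖_{C¹}`;
in particular `sup_{t ≥ 0} ‖P_x(·,t)‖_{C¹} ≤ max(‖P₀‖_{C¹}, (1/(a₀ℓ))‖ω_B‖_{C¹})`. -/
theorem Pint_apriori_C1_bound
    (ℓ a₀ : ℝ) (hℓ : 0 < ℓ) (ha₀ : 0 < a₀)
    (ωB P₀ : ℝ → ℝ)
    (hωB : ContDiff ℝ 1 ωB) (hωBper : Function.Periodic ωB ℓ)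
    (hP₀ : ContDiff ℝ 1 P₀) (hP₀per : Function.Periodic P₀ ℓ)
    (x : ℝ → ℝ) (hx : ContinuousOn x (Ici 0)) (hx0 : x 0 = 0) :
    (∀ t ∈ Ici (0 : ℝ),
      C1Norm ℓ (fun ξ => Pint ℓ a₀ ωB P₀ x ξ t)
        ≤ Real.exp (-a₀ * t) * C1Norm ℓ P₀
          + (1 - Real.exp (-a₀ * t)) * (1 / (a₀ * ℓ)) * C1Norm ℓ ωB) ∧
    (∀ t ∈ Ici (0 : ℝ),
      C1Norm ℓ (fun ξ => Pint ℓ a₀ ωB P₀ x ξ t)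
        ≤ max (C1Norm ℓ P₀) ((1 / (a₀ * ℓ)) * C1Norm ℓ ωB)) := by
  have hωC : Continuous ωB := hωB.continuous
  have hPC : Continuous P₀ := hP₀.continuous
  have hωB' : Continuous (deriv ωB) := hωB.continuous_deriv le_rfl
  have hP₀' : Continuous (deriv P₀) := hP₀.continuous_deriv le_rfl
  haveI : Nonempty (Set.Icc (0:ℝ) ℓ) := ⟨⟨0, le_refl 0, hℓ.le⟩⟩
  have h1 : ∀ t ∈ Ici (0 : ℝ),
      C1Norm ℓ (fun ξ => Pint ℓ a₀ ωB P₀ x ξ t)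
        ≤ Real.exp (-a₀ * t) * C1Norm ℓ P₀
          + (1 - Real.exp (-a₀ * t)) * (1 / (a₀ * ℓ)) * C1Norm ℓ ωB := by
    intro t ht
    have ht' : (0:ℝ) ≤ t := ht
    have hS1 : (⨆ ξ : Set.Icc (0:ℝ) ℓ, |(fun ξ => Pint ℓ a₀ ωB P₀ x ξ t) ξ.1|)
        ≤ Real.exp (-a₀ * t) * (⨆ ξ : Set.Icc (0:ℝ) ℓ, |P₀ ξ.1|)
          + (1 - Real.exp (-a₀ * t)) * (1/(a₀ * ℓ)) * (⨆ ξ : Set.Icc (0:ℝ) ℓ, |ωB ξ.1|) := by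
      refine ciSup_le fun ξ => ?_
      have := key_bound ℓ a₀ hℓ ha₀ P₀ ωB hPC hP₀per hωC hωBper x hx ht' ξ.1
      simpa [Pint] using this
    have hS2 : (⨆ ξ : Set.Icc (0:ℝ) ℓ, |deriv (fun ξ => Pint ℓ a₀ ωB P₀ x ξ t) ξ.1|)
        ≤ Real.exp (-a₀ * t) * (⨆ ξ : Set.Icc (0:ℝ) ℓ, |deriv P₀ ξ.1|)
          + (1 - Real.exp (-a₀ * t)) * (1/(a₀ * ℓ))
            * (⨆ ξ : Set.Icc (0:ℝ) ℓ, |deriv ωB ξ.1|) := by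
      refine ciSup_le fun ξ => ?_
      rw [deriv_Pint ℓ a₀ hℓ ωB P₀ x hωB hωBper hP₀ hx ht' ξ.1]
      exact key_bound ℓ a₀ hℓ ha₀ (deriv P₀) (deriv ωB) hP₀' (per_deriv hP₀per)
        hωB' (per_deriv hωBper) x hx ht' ξ.1
    calc C1Norm ℓ (fun ξ => Pint ℓ a₀ ωB P₀ x ξ t)
        = (⨆ ξ : Set.Icc (0:ℝ) ℓ, |(fun ξ => Pint ℓ a₀ ωB P₀ x ξ t) ξ.1|)
          + ⨆ ξ : Set.Icc (0:ℝ) ℓ, |deriv (fun ξ => Pint ℓ a₀ ωB P₀ x ξ t) ξ.1| := rfl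
      _ ≤ (Real.exp (-a₀ * t) * (⨆ ξ : Set.Icc (0:ℝ) ℓ, |P₀ ξ.1|)
            + (1 - Real.exp (-a₀ * t)) * (1/(a₀ * ℓ)) * (⨆ ξ : Set.Icc (0:ℝ) ℓ, |ωB ξ.1|))
          + (Real.exp (-a₀ * t) * (⨆ ξ : Set.Icc (0:ℝ) ℓ, |deriv P₀ ξ.1|)
            + (1 - Real.exp (-a₀ * t)) * (1/(a₀ * ℓ))
              * (⨆ ξ : Set.Icc (0:ℝ) ℓ, |deriv ωB ξ.1|)) := add_le_add hS1 hS2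
      _ = Real.exp (-a₀ * t) * C1Norm ℓ P₀
          + (1 - Real.exp (-a₀ * t)) * (1 / (a₀ * ℓ)) * C1Norm ℓ ωB := by
          unfold C1Norm; ring
  refine ⟨h1, fun t ht => ?_⟩
  have ht' : (0:ℝ) ≤ t := ht
  have hle := h1 t ht
  set e := Real.exp (-a₀ * t) with he
  have he1 : e ≤ 1 := Real.exp_le_one_iff.mpr (by nlinarith)
  have he0 : 0 < e := Real.exp_pos _
  set A := C1Norm ℓ P₀ with hA
  set B := (1 / (a₀ * ℓ)) * C1Norm ℓ ωB with hB
  have hAM : A ≤ max A B := le_max_left _ _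
  have hBM : B ≤ max A B := le_max_right _ _
  have h2 : e * A ≤ e * max A B := mul_le_mul_of_nonneg_left hAM he0.le
  have h3 : (1 - e) * B ≤ (1 - e) * max A B :=
    mul_le_mul_of_nonneg_left hBM (by linarith)
  have h4 : (1 - e) * (1 / (a₀ * ℓ)) * C1Norm ℓ ωB = (1 - e) * B := by rw [hB]; ring
  calc C1Norm ℓ (fun ξ => Pint ℓ a₀ ωB P₀ x ξ t)
      ≤ e * A + (1 - e) * (1 / (a₀ * ℓ)) * C1Norm ℓ ωB := hle
    _ = e * A + (1 - e) * B := by rw [h4]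
    _ ≤ e * max A B + (1 - e) * max A B := add_le_add h2 h3
    _ = max A B := by ring
end

section
/- Explicit solution and asymptotic periodicity of the inhomogeneous part: let a₀ > 0, T > 0, and let v̄ : ℝ → ℝ be continuous and T-periodic. Define z̃(t) = ∫₀ᵗ exp(−∫ᵤᵗ (a₀ − i v̄(s)) ds) du for t ≥ 0. Then |z̃(t+T) − z̃(t)| ≤ e^{−a₀t}(1 − e^{−a₀T})/a₀ for all t ≥ 0; in particular z̃(t+T) − z̃(t) → 0 as t → ∞. -/
open Real Set Filter

set_option maxHeartbeats 1000000

/-- **Asymptotic periodicity of the inhomogeneous part**: with `a₀ > 0`, `T > 0`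
and `v̄` continuous and `T`-periodic, the function
`z̃(t) = ∫₀ᵗ exp(−∫ᵤᵗ (a₀ − i v̄(s)) ds) du` satisfies
`|z̃(t+T) − z̃(t)| ≤ e^{−a₀t}(1 − e^{−a₀T})/a₀`; in particular
`z̃(t+T) − z̃(t) → 0` as `t → ∞`. -/
theorem inhomogeneous_part_asymptotically_periodic
    (a₀ T : ℝ) (ha₀ : 0 < a₀) (hT : 0 < T)
    (vbar : ℝ → ℝ) (hvbar : Continuous vbar) (hvper : Function.Periodic vbar T)
    (ztil : ℝ → ℂ)
    (hztil : ∀ t : ℝ, ztil t =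
      ∫ u in (0 : ℝ)..t,
        Complex.exp (-(∫ s in u..t, ((a₀ : ℂ) - Complex.I * (vbar s : ℂ))))) :
    (∀ t ∈ Ici (0 : ℝ),
      ‖ztil (t + T) - ztil t‖
        ≤ Real.exp (-a₀ * t) * (1 - Real.exp (-a₀ * T)) / a₀) ∧
    Tendsto (fun t => ztil (t + T) - ztil t) atTop (nhds 0) := by
  set g : ℝ → ℂ := fun s => (a₀ : ℂ) - Complex.I * (vbar s : ℂ) with hg_def
  have hg : Continuous g := by
    continuity
  have hgint : ∀ a b : ℝ, IntervalIntegrable g MeasureTheory.volume a b :=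
    fun a b => hg.intervalIntegrable a b
  -- continuity of u ↦ exp(-(∫ s in u..t, g s))
  have hcont : ∀ t : ℝ, Continuous fun u => Complex.exp (-(∫ s in u..t, g s)) := by
    intro t
    have h1 : Continuous fun u => ∫ s in (0:ℝ)..u, g s :=
      intervalIntegral.continuous_primitive hgint 0
    have h2 : (fun u => ∫ s in u..t, g s)
        = fun u => (∫ s in (0:ℝ)..t, g s) - ∫ s in (0:ℝ)..u, g s := by
      funext u
      rw [intervalIntegral.integral_interval_sub_left (hgint 0 t) (hgint 0 u)]
    have h3 : Continuous fun u => ∫ s in u..t, g s := by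
      rw [h2]; exact continuous_const.sub h1
    exact Complex.continuous_exp.comp h3.neg
  -- periodicity of the inner integral
  have hshift : ∀ w t : ℝ, (∫ s in (w+T)..(t+T), g s) = ∫ s in w..t, g s := by
    intro w t
    rw [← intervalIntegral.integral_comp_add_right g T]
    congr 1
    funext s
    simp [hg_def, hvper s]
  -- key identity
  have hkey : ∀ t : ℝ, ztil (t + T) - ztil t
      = ∫ w in (-T)..(0:ℝ), Complex.exp (-(∫ s in w..t, g s)) := by
    intro t
    have h1 : ztil (t + T) = ∫ w in (-T)..t, Complex.exp (-(∫ s in w..t, g s)) := by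
      rw [hztil (t + T)]
      rw [show (0:ℝ) = -T + T by ring]
      rw [← intervalIntegral.integral_comp_add_right
        (fun u => Complex.exp (-(∫ s in u..(t+T), g s))) T]
      congr 1
      funext w
      rw [hshift w t]
    rw [h1, hztil t, ← intervalIntegral.integral_add_adjacent_intervals
      (((hcont t).intervalIntegrable (-T) 0)) (((hcont t).intervalIntegrable 0 t))]
    ring
  -- norm of integrand
  have hnorm : ∀ t w : ℝ, ‖Complex.exp (-(∫ s in w..t, g s))‖
      = Real.exp (a₀ * w - a₀ * t) := by
    intro t w
    have h1 : (∫ s in w..t, g s)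
        = ((a₀ * (t - w) : ℝ) : ℂ) - Complex.I * ((∫ s in w..t, vbar s : ℝ) : ℂ) := by
      have hi2 : IntervalIntegrable (fun s : ℝ => Complex.I * (vbar s : ℂ))
          MeasureTheory.volume w t := Continuous.intervalIntegrable (by continuity) w t
      have : (∫ s in w..t, g s)
          = ∫ s in w..t, (((a₀ : ℂ)) - Complex.I * (vbar s : ℂ)) := rfl
      rw [this, intervalIntegral.integral_sub (intervalIntegrable_const) hi2]
      rw [intervalIntegral.integral_const_mul, intervalIntegral.integral_const]
      simp only [intervalIntegral.integral_ofReal, Complex.real_smul]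
      push_cast
      ring
    rw [Complex.norm_exp, h1]
    norm_num [Complex.ext_iff]
    ring
  -- the explicit bound
  have hbound : ∀ t : ℝ, ‖ztil (t + T) - ztil t‖
      ≤ Real.exp (-a₀ * t) * (1 - Real.exp (-a₀ * T)) / a₀ := by
    intro t
    rw [hkey t]
    have hle : ‖∫ w in (-T)..(0:ℝ), Complex.exp (-(∫ s in w..t, g s))‖
        ≤ |∫ w in (-T)..(0:ℝ), Real.exp (a₀ * w - a₀ * t)| := by
      apply intervalIntegral.norm_integral_le_abs_of_norm_le
      · filter_upwards with w
        rw [hnorm t w]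
      · exact (Real.continuous_exp.comp (by continuity)).intervalIntegrable _ _
    refine hle.trans ?_
    have hcomp : (∫ w in (-T)..(0:ℝ), Real.exp (a₀ * w - a₀ * t))
        = Real.exp (-a₀ * t) * (1 - Real.exp (-a₀ * T)) / a₀ := by
      have : ∀ w : ℝ, Real.exp (a₀ * w - a₀ * t)
          = Real.exp (-a₀ * t) * Real.exp (a₀ * w) := by
        intro w; rw [← Real.exp_add]; ring_nf
      simp_rw [this]
      rw [intervalIntegral.integral_const_mul]
      rw [intervalIntegral.integral_comp_mul_left (fun x => Real.exp x) (ne_of_gt ha₀)]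
      rw [integral_exp]
      field_simp
      rw [smul_eq_mul, mul_zero, Real.exp_zero, ← mul_assoc, mul_one_div_cancel ha₀.ne', one_mul]
    have h0 : Real.exp (-a₀ * T) ≤ 1 := Real.exp_le_one_iff.mpr (by nlinarith)
    rw [hcomp, abs_of_nonneg (div_nonneg (mul_nonneg (Real.exp_nonneg _) (by linarith)) ha₀.le)]
  constructor
  · intro t _
    exact hbound t
  · apply squeeze_zero_norm' (Filter.Eventually.of_forall hbound)
    have h1 : Tendsto (fun t : ℝ => Real.exp (-a₀ * t)) atTop (nhds 0) := by
      have : Tendsto (fun t : ℝ => -a₀ * t) atTop atBot := by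
        apply Tendsto.const_mul_atTop_of_neg (neg_neg_iff_pos.mpr ha₀) tendsto_id
      exact Real.tendsto_exp_atBot.comp this
    have := (h1.mul_const ((1 - Real.exp (-a₀ * T)))).div_const a₀
    simpa using this
end

section
/- Higher-order Fourier coefficients (Proposition on higher order coefficients): let a₀ > 0, T > 0, c ∈ ℂ, and let v̄ : ℝ → ℝ be continuous and T-periodic. Then there exists a differentiable T-periodic function z_p : ℝ → ℂ satisfying z_p'(t) = −(a₀ − i v̄(t)) z_p(t) + c for all t, such that every differentiable z : [0,∞) → ℂ satisfying z'(t) = −(a₀ − i v̄(t)) z(t) + c converges to it: z(t) − z_p(t) → 0 as t → ∞. In the special case c = 0 one can take z_p ≡ 0, i.e. every solution tends to 0. -/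
open Real Set Filter

/-- **Higher-order Fourier coefficients**: for `a₀ > 0`, `T > 0`, `c ∈ ℂ` and `v̄`
continuous and `T`-periodic, there is a differentiable `T`-periodic solution `z_p`
of `z' = −(a₀ − i v̄(t)) z + c` to which every solution on `[0,∞)` converges;
when `c = 0` one can take `z_p ≡ 0`, i.e. every solution tends to `0`. -/
theorem higher_order_coefficients_asymptotics
    (a₀ T : ℝ) (ha₀ : 0 < a₀) (hT : 0 < T) (c : ℂ)
    (vbar : ℝ → ℝ) (hvbar : Continuous vbar) (hvper : Function.Periodic vbar T) :
    ∃ zp : ℝ → ℂ,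
      (∀ t : ℝ,
        HasDerivAt zp (-((a₀ : ℂ) - Complex.I * (vbar t : ℂ)) * zp t + c) t) ∧
      (∀ t : ℝ, zp (t + T) = zp t) ∧
      (∀ z : ℝ → ℂ,
        (∀ t ∈ Ici (0 : ℝ),
          HasDerivWithinAt z (-((a₀ : ℂ) - Complex.I * (vbar t : ℂ)) * z t + c)
            (Ici 0) t) →
        Tendsto (fun t => z t - zp t) atTop (nhds 0)) ∧
      (c = 0 → ∀ t : ℝ, zp t = 0) := by
  -- the antiderivative of v̄
  set V : ℝ → ℝ := fun t => ∫ s in (0:ℝ)..t, vbar s with hV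
  have hVderiv : ∀ t : ℝ, HasDerivAt V (vbar t) t := fun t =>
    (hvbar.integral_hasStrictDerivAt 0 t).hasDerivAt
  -- the integrating factor μ
  set g : ℝ → ℂ := fun t => ((a₀ * t : ℝ) : ℂ) - Complex.I * ((V t : ℝ) : ℂ) with hg
  set μ : ℝ → ℂ := fun t => Complex.exp (g t) with hμ
  have hμne : ∀ t, μ t ≠ 0 := fun t => Complex.exp_ne_zero _
  set d : ℝ → ℂ := fun t => ((a₀ : ℂ) - Complex.I * (vbar t : ℂ)) with hd
  have hgderiv : ∀ t : ℝ, HasDerivAt g (d t) t := by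
    intro t
    have h1 : HasDerivAt (fun t : ℝ => ((a₀ * t : ℝ) : ℂ)) ((a₀ : ℂ)) t := by
      simpa using ((hasDerivAt_id t).const_mul a₀).ofReal_comp
    have h2 : HasDerivAt (fun t : ℝ => Complex.I * ((V t : ℝ) : ℂ))
        (Complex.I * (vbar t : ℂ)) t := ((hVderiv t).ofReal_comp).const_mul Complex.I
    exact h1.sub h2
  have hμderiv : ∀ t : ℝ, HasDerivAt μ (d t * μ t) t := fun t => by
    simpa [hμ, mul_comm] using (hgderiv t).cexp
  have hμcont : Continuous μ :=
    continuous_iff_continuousAt.2 fun t => (hμderiv t).continuousAt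
  -- its primitive J
  set J : ℝ → ℂ := fun t => ∫ s in (0:ℝ)..t, μ s with hJ
  have hJderiv : ∀ t : ℝ, HasDerivAt J (μ t) t := fun t =>
    (hμcont.integral_hasStrictDerivAt 0 t).hasDerivAt
  -- μ T ≠ 1
  have hnormμ : ∀ t : ℝ, ‖μ t‖ = Real.exp (a₀ * t) := by
    intro t
    rw [hμ, Complex.norm_exp]
    congr 1
    simp [hg]
  have hlamne : μ T - 1 ≠ 0 := by
    intro h
    have h1 : μ T = 1 := by linear_combination h
    have := hnormμ T
    rw [h1] at this
    simp at this
    nlinarith [Real.add_one_le_exp (a₀ * T), mul_pos ha₀ hT]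
  -- periodicity facts
  have hVadd : ∀ t : ℝ, V (t + T) = V t + V T := by
    intro t
    have h1 : (∫ s in (0:ℝ)..t, vbar s) + ∫ s in t..(t + T), vbar s
        = ∫ s in (0:ℝ)..(t + T), vbar s :=
      intervalIntegral.integral_add_adjacent_intervals
        (hvbar.intervalIntegrable _ _) (hvbar.intervalIntegrable _ _)
    have h2 : (∫ s in t..(t + T), vbar s) = ∫ s in (0:ℝ)..(0 + T), vbar s :=
      hvper.intervalIntegral_add_eq t 0
    simp only [zero_add] at h2
    simp only [hV]
    rw [← h1, h2]
  have hgadd : ∀ t : ℝ, g (t + T) = g T + g t := by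
    intro t
    simp only [hg, hVadd t]
    push_cast
    ring
  have hμadd : ∀ t : ℝ, μ (t + T) = μ T * μ t := by
    intro t
    simp only [hμ, hgadd t, Complex.exp_add]
  have hJadd : ∀ t : ℝ, J (t + T) = J T + μ T * J t := by
    intro t
    have h1 : (∫ s in (0:ℝ)..T, μ s) + ∫ s in T..(t + T), μ s
        = ∫ s in (0:ℝ)..(t + T), μ s :=
      intervalIntegral.integral_add_adjacent_intervals
        (hμcont.intervalIntegrable _ _) (hμcont.intervalIntegrable _ _)
    have h2 : (∫ s in (0:ℝ)..t, μ (s + T)) = ∫ s in (0 + T : ℝ)..(t + T), μ s :=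
      intervalIntegral.integral_comp_add_right μ T
    have h3 : (∫ s in (0:ℝ)..t, μ (s + T)) = μ T * ∫ s in (0:ℝ)..t, μ s := by
      rw [← intervalIntegral.integral_const_mul]
      congr 1
      ext s
      rw [hμadd s]
    simp only [hJ]
    rw [← h1]
    rw [zero_add] at h2
    rw [← h2, h3]
  -- the periodic solution
  set z₀ : ℂ := c * J T / (μ T - 1) with hz₀
  set zp : ℝ → ℂ := fun t => (z₀ + c * J t) / μ t with hzp
  have hz₀key : z₀ + c * J T = μ T * z₀ := by
    rw [hz₀]
    field_simp [hlamne]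
    ring
  have hzpderiv : ∀ t : ℝ, HasDerivAt zp (-(d t) * zp t + c) t := by
    intro t
    have h1 : HasDerivAt (fun t => z₀ + c * J t) (c * μ t) t :=
      ((hJderiv t).const_mul c).const_add z₀
    have h2 := h1.div (hμderiv t) (hμne t)
    have heq : (c * μ t * μ t - (z₀ + c * J t) * (d t * μ t)) / μ t ^ 2
        = -(d t) * zp t + c := by
      simp only [hzp]
      field_simp [hμne t]
      ring
    rw [heq] at h2
    exact h2
  have hzpper : ∀ t : ℝ, zp (t + T) = zp t := by
    intro t
    simp only [hzp]
    rw [hμadd t, hJadd t]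
    have : z₀ + c * (J T + μ T * J t) = μ T * (z₀ + c * J t) := by
      rw [mul_add, ← add_assoc, hz₀key]; ring
    rw [this, mul_div_mul_left _ _ (hμne T)]
  refine ⟨zp, fun t => by simpa [hd] using hzpderiv t, hzpper, ?_, ?_⟩
  · -- convergence of every solution
    intro z hz
    set w : ℝ → ℂ := fun t => μ t * (z t - zp t) with hw
    have hwderiv : ∀ x ∈ Ici (0:ℝ), HasDerivWithinAt w 0 (Ici 0) x := by
      intro x hx
      have hdz : HasDerivWithinAt (fun t => z t - zp t) (-(d x) * (z x - zp x)) (Ici 0) x := by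
        have := (hz x hx).sub ((hzpderiv x).hasDerivWithinAt)
        have heq : -((a₀ : ℂ) - Complex.I * (vbar x : ℂ)) * z x + c - (-(d x) * zp x + c)
            = -(d x) * (z x - zp x) := by simp only [hd]; ring
        rwa [heq] at this
      have := ((hμderiv x).hasDerivWithinAt).mul hdz
      have heq : d x * μ x * (z x - zp x) + μ x * (-(d x) * (z x - zp x)) = 0 := by ring
      rwa [heq] at this
    have hwconst : ∀ t ∈ Ici (0:ℝ), w t = w 0 := by
      intro t ht
      have hcont : ContinuousOn w (Icc 0 t) := fun x hx =>
        ((hwderiv x (Icc_subset_Ici_self hx)).continuousWithinAt).mono Icc_subset_Ici_self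
      exact constant_of_has_deriv_right_zero hcont
        (fun x hx => (hwderiv x hx.1).mono (Ici_subset_Ici.2 hx.1))
        t ⟨ht, le_refl t⟩
    have hform : ∀ t ∈ Ici (0:ℝ), z t - zp t = w 0 / μ t := by
      intro t ht
      have := hwconst t ht
      simp only [hw] at this
      field_simp [hμne t] at this ⊢
      linear_combination this
    have hbound : ∀ᶠ t in atTop, ‖z t - zp t‖ ≤ ‖w 0‖ * Real.exp (-(a₀ * t)) := by
      filter_upwards [eventually_ge_atTop (0:ℝ)] with t ht
      rw [hform t ht]
      have : ‖w 0 / μ t‖ = ‖w 0‖ / Real.exp (a₀ * t) := by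
        rw [norm_div, hnormμ t]
      rw [this, Real.exp_neg, div_eq_mul_inv]
    have hexp : Tendsto (fun t : ℝ => ‖w 0‖ * Real.exp (-(a₀ * t)))
        atTop (nhds 0) := by
      have h1 : Tendsto (fun t : ℝ => a₀ * t) atTop atTop :=
        tendsto_id.const_mul_atTop ha₀
      have h2 : Tendsto (fun t : ℝ => Real.exp (-(a₀ * t))) atTop (nhds 0) :=
        Real.tendsto_exp_neg_atTop_nhds_zero.comp h1
      simpa using h2.const_mul (‖w 0‖)
    exact squeeze_zero_norm' hbound hexp
  · -- when c = 0, zp vanishes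
    intro hc t
    simp [hzp, hz₀, hc]
end
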